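/- A bipartite graph G is a partial cube if and only if the Djoković–Winkler relation Θ is an equivalence relation on E(G). -/

import Mathlib

open SimpleGraph

universe u

variable {V : Type u}

/-- The Djoković–Winkler relation on ordered pairs of vertices:
`ab Θ xy` iff `d(a,x) + d(b,y) ≠ d(a,y) + d(b,x)`. -/
def ThetaV (G : SimpleGraph V) (a b x y : V) : Prop :=
  G.dist a x + G.dist b y ≠ G.dist a y + G.dist b x

/-- The Djoković–Winkler relation `Θ` on unordered edges. -/
def Theta (G : SimpleGraph V) (e f : Sym2 V) : Prop :=
  ∃ a b x y : V, e = s(a, b) ∧ f = s(x, y) ∧ ThetaV G a b x y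

/-- A partial cube: a connected graph isometrically embeddable into a hypercube,
i.e. there is a map to boolean vectors such that graph distance equals Hamming distance. -/
def IsPartialCube (G : SimpleGraph V) : Prop :=
  G.Connected ∧ ∃ (I : Type u) (h : V → I → Bool),
    ∀ u v : V, {i : I | h u i ≠ h v i}.Finite ∧ G.dist u v = {i : I | h u i ≠ h v i}.ncard

/-- A set of vertices is convex if it contains every shortest path between its members. -/
def IsConvexSet (G : SimpleGraph V) (S : Set V) : Prop :=
  ∀ u ∈ S, ∀ v ∈ S, ∀ p : G.Walk u v, p.length = G.dist u v → ∀ x ∈ p.support, x ∈ S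

/-- `W_{uv}`: vertices strictly closer to `u` than to `v`. -/
def Wset (G : SimpleGraph V) (u v : V) : Set V := {w | G.dist u w < G.dist v w}

/-- `U_{uv}`: vertices of `W_{uv}` with a neighbour in `W_{vu}`. -/
def Uset (G : SimpleGraph V) (u v : V) : Set V :=
  {w | w ∈ Wset G u v ∧ ∃ z, G.Adj w z ∧ z ∈ Wset G v u}

/-- The interval `I(a,b)`: vertices lying on some shortest `a,b`-path. -/
def GInterval (G : SimpleGraph V) (a b : V) : Set V :=
  {x | G.dist a x + G.dist x b = G.dist a b}

/-- An isometric cycle: distances along the cycle agree with distances in `G`. -/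
def IsIsometricCycle (G : SimpleGraph V) {u : V} (c : G.Walk u u) : Prop :=
  c.IsCycle ∧ ∀ i j : ℕ, i ≤ c.length → j ≤ c.length →
    G.dist (c.getVert i) (c.getVert j) =
      min (max i j - min i j) (c.length - (max i j - min i j))

/-- A convex cycle: a cycle whose vertex set is convex. -/
def IsConvexCycle (G : SimpleGraph V) {u : V} (c : G.Walk u u) : Prop :=
  c.IsCycle ∧ IsConvexSet G {x | x ∈ c.support}

/-- `S` and `E` are the vertex set and edge set of an isometric cycle of `G`. -/
def IsIsometricCycleOn (G : SimpleGraph V) (S : Set V) (E : Set (Sym2 V)) : Prop :=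
  ∃ (u : V) (c : G.Walk u u), IsIsometricCycle G c ∧
    S = {x | x ∈ c.support} ∧ E = {e | e ∈ c.edges}

/-- `S` and `E` are the vertex set and edge set of a convex cycle of `G`. -/
def IsConvexCycleOn (G : SimpleGraph V) (S : Set V) (E : Set (Sym2 V)) : Prop :=
  ∃ (u : V) (c : G.Walk u u), IsConvexCycle G c ∧
    S = {x | x ∈ c.support} ∧ E = {e | e ∈ c.edges}

/-- A traverse from the edge `v1u1` to the edge `v2u2`: a sequence of isometric cycles,
given by their vertex sets `S i` and edge sets `E i`, such that `v1u1` lies only on the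
first cycle, `v2u2` lies only on the last one, consecutive cycles meet in exactly one
edge which is `Θ`-related to `v1u1`, non-consecutive cycles are disjoint, and a shortest
`v1,v2`-path of `G` runs along the union of the cycles. -/
def IsTraverse (G : SimpleGraph V) (v1 u1 v2 u2 : V) {n : ℕ}
    (S : Fin n → Set V) (E : Fin n → Set (Sym2 V)) : Prop :=
  1 ≤ n ∧
  (∀ i, IsIsometricCycleOn G (S i) (E i)) ∧
  (∀ i : Fin n, s(v1, u1) ∈ E i ↔ (i : ℕ) = 0) ∧
  (∀ i : Fin n, s(v2, u2) ∈ E i ↔ (i : ℕ) = n - 1) ∧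
  (∀ i j : Fin n, (i : ℕ) + 1 = (j : ℕ) →
    ∃ x y : V, G.Adj x y ∧ Theta G s(x, y) s(v1, u1) ∧
      S i ∩ S j = {x, y} ∧ E i ∩ E j = {s(x, y)}) ∧
  (∀ i j : Fin n, (i : ℕ) + 1 < (j : ℕ) → S i ∩ S j = ∅) ∧
  (∃ p : G.Walk v1 v2, p.length = G.dist v1 v2 ∧ ∀ e ∈ p.edges, ∃ i, e ∈ E i)

/-- A convex traverse: a traverse all of whose cycles are convex. -/
def IsConvexTraverse (G : SimpleGraph V) (v1 u1 v2 u2 : V) {n : ℕ}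
    (S : Fin n → Set V) (E : Fin n → Set (Sym2 V)) : Prop :=
  IsTraverse G v1 u1 v2 u2 S E ∧ ∀ i, IsConvexSet G (S i)

/-- Two cycles intertwine if they share a path with at least two edges and all their
other vertices are pairwise distinct. -/
def Intertwine (G : SimpleGraph V) {a b : V} (c1 : G.Walk a a) (c2 : G.Walk b b) : Prop :=
  ∃ (x y : V) (p : G.Walk x y), p.IsPath ∧ 2 ≤ p.length ∧
    (∀ e ∈ p.edges, e ∈ c1.edges ∧ e ∈ c2.edges) ∧
    {z | z ∈ c1.support} ∩ {z | z ∈ c2.support} = {z | z ∈ p.support}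


section AuxDW

variable {G : SimpleGraph V}

private lemma thetaV_comm' {a b x y : V} (h : ThetaV G a b x y) : ThetaV G x y a b := by
  unfold ThetaV at *
  rw [G.dist_comm (u := x) (v := a), G.dist_comm (u := y) (v := b),
    G.dist_comm (u := x) (v := b), G.dist_comm (u := y) (v := a)]
  omega

private lemma thetaV_swap_left' {a b x y : V} (h : ThetaV G a b x y) : ThetaV G b a x y := by
  unfold ThetaV at *; omega

private lemma thetaV_swap_right' {a b x y : V} (h : ThetaV G a b x y) : ThetaV G a b y x := by
  unfold ThetaV at *; omega

private lemma theta_mk_iff' {a b x y : V} :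
    Theta G s(a, b) s(x, y) ↔ ThetaV G a b x y := by
  constructor
  · rintro ⟨a', b', x', y', he, hf, ht⟩
    rw [Sym2.eq_iff] at he hf
    rcases he with ⟨rfl, rfl⟩ | ⟨rfl, rfl⟩ <;> rcases hf with ⟨rfl, rfl⟩ | ⟨rfl, rfl⟩
    · exact ht
    · exact thetaV_swap_right' ht
    · exact thetaV_swap_left' ht
    · exact thetaV_swap_left' (thetaV_swap_right' ht)
  · intro ht; exact ⟨a, b, x, y, rfl, rfl, ht⟩

private lemma walk_parity' (C : G.Coloring (Fin 2)) {u v : V} (p : G.Walk u v) :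
    C u = C v ↔ Even p.length := by
  induction p with
  | nil => simp
  | cons h q ih =>
    have hne := C.valid h
    have key : ∀ x y z : Fin 2, x ≠ y → (x = z ↔ ¬ y = z) := by decide
    rw [Walk.length_cons, Nat.even_add_one, ← ih, key _ _ _ hne]

private lemma dist_parity' (C : G.Coloring (Fin 2)) (hconn : G.Connected) (u v : V) :
    C u = C v ↔ Even (G.dist u v) := by
  obtain ⟨p, hp⟩ := (hconn.preconnected u v).exists_walk_length_eq_dist
  rw [walk_parity' C p, hp]

private lemma adj_dist_dichotomy' (C : G.Coloring (Fin 2)) (hconn : G.Connected)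
    {a b : V} (hab : G.Adj a b) (w : V) :
    G.dist a w + 1 = G.dist b w ∨ G.dist b w + 1 = G.dist a w := by
  have h1 : G.dist a w ≤ G.dist a b + G.dist b w := hconn.dist_triangle
  have h2 : G.dist b w ≤ G.dist b a + G.dist a w := hconn.dist_triangle
  have hd : G.dist a b = 1 := dist_eq_one_iff_adj.mpr hab
  have hd2 : G.dist b a = 1 := dist_eq_one_iff_adj.mpr hab.symm
  have hne : G.dist a w ≠ G.dist b w := by
    intro h
    have p1 := dist_parity' C hconn a w
    have p2 := dist_parity' C hconn b w
    rw [h] at p1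
    have key : ∀ x y z : Fin 2, x ≠ y → ¬((x = z) ↔ (y = z)) := by decide
    exact key _ _ _ (C.valid hab) (p1.trans p2.symm)
  omega

private lemma thetaV_cross' {a b : V}
    (hd : ∀ w, G.dist a w + 1 = G.dist b w ∨ G.dist b w + 1 = G.dist a w)
    (x y : V) :
    ThetaV G a b x y ↔ ¬(G.dist a x < G.dist b x ↔ G.dist a y < G.dist b y) := by
  have hx := hd x; have hy := hd y
  unfold ThetaV
  rcases hx with h | h <;> rcases hy with h' | h' <;> omega

noncomputable instance instDecThetaV (G : SimpleGraph V) (a b x y : V) :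
    Decidable (ThetaV G a b x y) :=
  decidable_of_iff (¬(G.dist a x + G.dist b y = G.dist a y + G.dist b x)) Iff.rfl

/-- number of crossings of the walk `p` with respect to the cut of the edge `ab`. -/
noncomputable def crossCount (G : SimpleGraph V) (a b : V) {u v : V} (p : G.Walk u v) : ℕ :=
  (List.range p.length).countP
    (fun i => decide (ThetaV G a b (p.getVert i) (p.getVert (i+1))))

private lemma crossCount_parity' {a b : V}
    (hd : ∀ w, G.dist a w + 1 = G.dist b w ∨ G.dist b w + 1 = G.dist a w) :
    ∀ {u v : V} (p : G.Walk u v),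
      ((G.dist a u < G.dist b u) ↔ (G.dist a v < G.dist b v)) ↔
        Even (crossCount G a b p) := by
  intro u v p
  induction p with
  | nil => simp [crossCount]
  | @cons u w v h q ih =>
    unfold crossCount at *
    rw [Walk.length_cons, List.range_succ_eq_map, List.countP_cons, List.countP_map]
    simp only [Function.comp_def, Nat.succ_eq_add_one, Walk.getVert_cons_succ,
      Walk.getVert_zero]
    have hcr := thetaV_cross' hd u w
    by_cases hc : ThetaV G a b u w
    · rw [decide_eq_true hc, if_pos rfl, Nat.even_add_one]
      refine Iff.trans ?_ (not_congr ih)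
      have hx := hcr.mp hc
      tauto
    · rw [decide_eq_false hc, if_neg (by simp), Nat.add_zero]
      refine Iff.trans ?_ ih
      have hx : (G.dist a u < G.dist b u ↔ G.dist a w < G.dist b w) := by
        by_contra hn; exact hc (hcr.mpr hn)
      tauto

private lemma walk_getVert_dist_le' (hconn : G.Connected) {u v : V}
    (p : G.Walk u v) (i j : ℕ) (hij : i ≤ j) (hj : j ≤ p.length) :
    G.dist (p.getVert i) (p.getVert j) ≤ j - i := by
  induction j, hij using Nat.le_induction with
  | base => simp
  | succ j hij ih =>
    have hadj := p.adj_getVert_succ (lt_of_lt_of_le (Nat.lt_succ_self j) hj)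
    have h1 : G.dist (p.getVert i) (p.getVert (j+1)) ≤
        G.dist (p.getVert i) (p.getVert j) + G.dist (p.getVert j) (p.getVert (j+1)) :=
      hconn.dist_triangle
    have h2 : G.dist (p.getVert j) (p.getVert (j+1)) = 1 := dist_eq_one_iff_adj.mpr hadj
    have h3 := ih (le_of_lt hj)
    omega

private lemma shortest_getVert_dist' (hconn : G.Connected) {u v : V}
    (p : G.Walk u v) (hp : p.length = G.dist u v)
    {i j : ℕ} (hij : i ≤ j) (hj : j ≤ p.length) :
    G.dist (p.getVert i) (p.getVert j) = j - i := by
  have h1 : G.dist u (p.getVert i) ≤ i := by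
    have := walk_getVert_dist_le' hconn p 0 i (Nat.zero_le _) (le_trans hij hj)
    simpa using this
  have h2 := walk_getVert_dist_le' hconn p i j hij hj
  have h3 : G.dist (p.getVert j) v ≤ p.length - j := by
    have := walk_getVert_dist_le' hconn p j p.length hj le_rfl
    simpa [Walk.getVert_length] using this
  have ht1 : G.dist u v ≤ G.dist u (p.getVert j) + G.dist (p.getVert j) v :=
    hconn.dist_triangle
  have ht2 : G.dist u (p.getVert j) ≤ G.dist u (p.getVert i) +
      G.dist (p.getVert i) (p.getVert j) := hconn.dist_triangle
  omega

private lemma shortest_no_thetaV' (hconn : G.Connected) {u v : V}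
    (p : G.Walk u v) (hp : p.length = G.dist u v)
    {i j : ℕ} (hij : i < j) (hj : j < p.length) :
    ¬ ThetaV G (p.getVert i) (p.getVert (i+1)) (p.getVert j) (p.getVert (j+1)) := by
  have d1 : G.dist (p.getVert i) (p.getVert j) = j - i :=
    shortest_getVert_dist' hconn p hp (le_of_lt hij) (le_of_lt hj)
  have d2 : G.dist (p.getVert (i+1)) (p.getVert (j+1)) = j - i := by
    have := shortest_getVert_dist' hconn p hp (i := i+1) (j := j+1) (by omega) (by omega)
    omega
  have d3 : G.dist (p.getVert i) (p.getVert (j+1)) = j + 1 - i :=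
    shortest_getVert_dist' hconn p hp (by omega) (by omega)
  have d4 : G.dist (p.getVert (i+1)) (p.getVert j) = j - (i+1) :=
    shortest_getVert_dist' hconn p hp (by omega) (le_of_lt hj)
  unfold ThetaV
  omega

private lemma card_filter_sum' {I : Type*} [DecidableEq I] (s J : Finset I) (hs : s ⊆ J) :
    s.card = ∑ i ∈ J, if i ∈ s then 1 else 0 := by
  rw [← Finset.card_filter]
  congr 1
  ext i
  simp only [Finset.mem_filter]
  exact ⟨fun hi => ⟨hs hi, hi⟩, fun hi => hi.2⟩

private lemma cube_thetaV_iff' {I : Type*} (G : SimpleGraph V) (h : V → I → Bool)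
    (hdist : ∀ u v : V, {i : I | h u i ≠ h v i}.Finite ∧
      G.dist u v = {i : I | h u i ≠ h v i}.ncard)
    {a b x y : V} {i0 i1 : I}
    (hab : {i : I | h a i ≠ h b i} = {i0}) (hxy : {i : I | h x i ≠ h y i} = {i1}) :
    ThetaV G a b x y ↔ i0 = i1 := by
  classical
  obtain ⟨hA, dA⟩ := hdist a x
  obtain ⟨hB, dB⟩ := hdist b y
  obtain ⟨hC, dC⟩ := hdist a y
  obtain ⟨hD, dD⟩ := hdist b x
  set J : Finset I := hA.toFinset ∪ hB.toFinset ∪ hC.toFinset ∪ hD.toFinset with hJ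
  have memab : ∀ i : I, h a i ≠ h b i ↔ i = i0 := by
    intro i; rw [← Set.mem_singleton_iff, ← hab]; rfl
  have memxy : ∀ i : I, h x i ≠ h y i ↔ i = i1 := by
    intro i; rw [← Set.mem_singleton_iff, ← hxy]; rfl
  have sA : G.dist a x = ∑ i ∈ J, (if h a i ≠ h x i then 1 else 0) := by
    rw [dA, Set.ncard_eq_toFinset_card _ hA,
      card_filter_sum' _ J (by intro i hi; simp [hJ, hi])]
    exact Finset.sum_congr rfl fun i _ => by simp [Set.Finite.mem_toFinset]
  have sB : G.dist b y = ∑ i ∈ J, (if h b i ≠ h y i then 1 else 0) := by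
    rw [dB, Set.ncard_eq_toFinset_card _ hB,
      card_filter_sum' _ J (by intro i hi; simp [hJ, hi])]
    exact Finset.sum_congr rfl fun i _ => by simp [Set.Finite.mem_toFinset]
  have sC : G.dist a y = ∑ i ∈ J, (if h a i ≠ h y i then 1 else 0) := by
    rw [dC, Set.ncard_eq_toFinset_card _ hC,
      card_filter_sum' _ J (by intro i hi; simp [hJ, hi])]
    exact Finset.sum_congr rfl fun i _ => by simp [Set.Finite.mem_toFinset]
  have sD : G.dist b x = ∑ i ∈ J, (if h b i ≠ h x i then 1 else 0) := by
    rw [dD, Set.ncard_eq_toFinset_card _ hD,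
      card_filter_sum' _ J (by intro i hi; simp [hJ, hi])]
    exact Finset.sum_congr rfl fun i _ => by simp [Set.Finite.mem_toFinset]
  unfold ThetaV
  rw [sA, sB, sC, sD, ← Finset.sum_add_distrib, ← Finset.sum_add_distrib]
  constructor
  · intro ht
    by_contra hne
    apply ht
    apply Finset.sum_congr rfl
    intro i _
    have hor : h a i = h b i ∨ h x i = h y i := by
      by_contra hcon
      push_neg at hcon
      obtain ⟨h1, h2⟩ := hcon
      rw [memab] at h1; rw [memxy] at h2
      exact hne (h1 ▸ h2)
    have key : ∀ p q r s : Bool, (p = q ∨ r = s) →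
        ((if p ≠ r then 1 else 0) + (if q ≠ s then 1 else 0) : ℕ) =
          (if p ≠ s then 1 else 0) + (if q ≠ r then 1 else 0) := by decide
    exact key _ _ _ _ hor
  · rintro rfl
    have hmem0 : i0 ∈ J := by
      have h1 : h a i0 ≠ h b i0 := (memab i0).mpr rfl
      by_cases h2 : h a i0 = h x i0
      · have : h b i0 ≠ h x i0 := fun hc => h1 (h2.trans hc.symm)
        simp [hJ, Set.Finite.mem_toFinset, this]
      · simp [hJ, Set.Finite.mem_toFinset, h2]
    rw [← Finset.sum_erase_add J _ hmem0, ← Finset.sum_erase_add J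
      (fun i => (if h a i ≠ h y i then 1 else 0) + (if h b i ≠ h x i then 1 else 0)) hmem0]
    have heq : ∑ i ∈ J.erase i0, ((if h a i ≠ h x i then 1 else 0) +
        (if h b i ≠ h y i then 1 else 0)) = ∑ i ∈ J.erase i0,
        ((if h a i ≠ h y i then 1 else 0) + (if h b i ≠ h x i then 1 else 0)) := by
      apply Finset.sum_congr rfl
      intro i hi
      have hi0 : i ≠ i0 := Finset.ne_of_mem_erase hi
      have h1 : h a i = h b i := by
        by_contra hc; exact hi0 ((memab i).mp hc)
      have key : ∀ p q r s : Bool, p = q →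
          ((if p ≠ r then 1 else 0) + (if q ≠ s then 1 else 0) : ℕ) =
            (if p ≠ s then 1 else 0) + (if q ≠ r then 1 else 0) := by decide
      exact key _ _ _ _ h1
    rw [heq]
    have h1 : h a i0 ≠ h b i0 := (memab i0).mpr rfl
    have h2 : h x i0 ≠ h y i0 := (memxy i0).mpr rfl
    have key2 : ∀ p q r s : Bool, p ≠ q → r ≠ s →
        ((if p ≠ r then 1 else 0) + (if q ≠ s then 1 else 0) : ℕ) ≠
          (if p ≠ s then 1 else 0) + (if q ≠ r then 1 else 0) := by decide
    have := key2 _ _ _ _ h1 h2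
    omega

private lemma countP_eq_one_aux {α : Type*} (l : List α) (P : α → Bool) (hnd : l.Nodup)
    (i : α) (hi : i ∈ l) (hPi : P i) (huniq : ∀ j ∈ l, P j → j = i) :
    l.countP P = 1 := by
  rw [List.countP_eq_length_filter]
  have hfil : l.filter P = [i] := by
    have hnd' : (l.filter P).Nodup := hnd.filter _
    have hmem : i ∈ l.filter P := List.mem_filter.mpr ⟨hi, hPi⟩
    have hall : ∀ j ∈ l.filter P, j = i := fun j hj =>
      huniq j (List.mem_filter.mp hj).1 (List.mem_filter.mp hj).2
    match hl : l.filter P with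
    | [] => rw [hl] at hmem; simp at hmem
    | [a] => rw [hl] at hall; simp_all
    | a :: b :: t =>
      rw [hl] at hall hnd'
      have ha := hall a (by simp)
      have hb := hall b (by simp)
      subst ha
      rw [← hb] at hnd'
      simp at hnd'
  rw [hfil]
  rfl

private lemma edge_endpoints (e : Sym2 V) (he : e ∈ G.edgeSet) :
    ∃ ab : V × V, e = s(ab.1, ab.2) ∧ G.Adj ab.1 ab.2 := by
  induction e with
  | _ x y => exact ⟨(x, y), rfl, G.mem_edgeSet.mp he⟩

end AuxDW

/-- A (connected) bipartite graph `G` is a partial cube if and only if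
the Djoković–Winkler relation `Θ` is an equivalence relation on the edges of `G`. -/
theorem stmt0 (G : SimpleGraph V) (hconn : G.Connected) (hbip : G.Colorable 2) :
    IsPartialCube G ↔ Equivalence (fun e f : G.edgeSet => Theta G e.1 f.1) := by
  classical
  obtain ⟨C⟩ := hbip
  constructor
  · rintro ⟨-, I, h, hh⟩
    have sing : ∀ a b : V, G.Adj a b → ∃ i : I, {i' : I | h a i' ≠ h b i'} = {i} := by
      intro a b hab
      have hd1 : G.dist a b = 1 := dist_eq_one_iff_adj.mpr hab
      have h2 := (hh a b).2
      rw [hd1] at h2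
      exact Set.ncard_eq_one.mp h2.symm
    constructor
    · rintro ⟨e, he⟩
      obtain ⟨⟨a, b⟩, hab1, hab2⟩ := edge_endpoints e he
      refine ⟨a, b, a, b, hab1, hab1, ?_⟩
      unfold ThetaV
      have hd1 : G.dist a b = 1 := dist_eq_one_iff_adj.mpr hab2
      have hd2 : G.dist b a = 1 := dist_eq_one_iff_adj.mpr hab2.symm
      simp [SimpleGraph.dist_self, hd1, hd2]
    · rintro e f ⟨a, b, x, y, he, hf, ht⟩
      exact ⟨x, y, a, b, hf, he, thetaV_comm' ht⟩
    · rintro e f g hef hfg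
      obtain ⟨⟨a, b⟩, he1, he2⟩ := edge_endpoints e.1 e.2
      obtain ⟨⟨x, y⟩, hf1, hf2⟩ := edge_endpoints f.1 f.2
      obtain ⟨⟨z, w⟩, hg1, hg2⟩ := edge_endpoints g.1 g.2
      rw [he1, hf1] at hef
      rw [hf1, hg1] at hfg
      rw [theta_mk_iff'] at hef hfg
      obtain ⟨ie, hie⟩ := sing a b he2
      obtain ⟨imid, hif⟩ := sing x y hf2
      obtain ⟨ig, hig⟩ := sing z w hg2
      have h1 := (cube_thetaV_iff' G h hh hie hif).mp hef
      have h2 := (cube_thetaV_iff' G h hh hif hig).mp hfg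
      rw [he1, hg1, theta_mk_iff']
      exact (cube_thetaV_iff' G h hh hie hig).mpr (h1.trans h2)
  · intro hEq
    refine ⟨hconn, ?_⟩
    set St : Setoid G.edgeSet := ⟨fun e f => Theta G e.1 f.1, hEq⟩ with hSt
    choose pk hpk1 hpk2 using fun e : G.edgeSet => edge_endpoints e.1 e.2
    refine ⟨Quotient St,
      fun v q => decide (G.dist (pk q.out).1 v < G.dist (pk q.out).2 v), ?_⟩
    intro u v
    obtain ⟨p, hp⟩ := (hconn.preconnected u v).exists_walk_length_eq_dist
    have hmem : ∀ i : ℕ, i < p.length → s(p.getVert i, p.getVert (i+1)) ∈ G.edgeSet :=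
      fun i hi => G.mem_edgeSet.mpr (p.adj_getVert_succ hi)
    set f : Fin p.length → Quotient St :=
      fun i => Quotient.mk St ⟨s(p.getVert i, p.getVert (i+1)), hmem i i.2⟩ with hfdef
    have hnoθ : ∀ i j : ℕ, i < p.length → j < p.length → i ≠ j →
        ¬ ThetaV G (p.getVert i) (p.getVert (i+1)) (p.getVert j) (p.getVert (j+1)) := by
      intro i j hi hj hne hθ
      rcases Nat.lt_or_ge i j with hlt | hge
      · exact shortest_no_thetaV' hconn p hp hlt hj hθ
      · have hlt : j < i := by omega
        exact shortest_no_thetaV' hconn p hp hlt hi (thetaV_comm' hθ)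
    have hrel : ∀ (q : Quotient St) (i : Fin p.length), f i = q →
        ThetaV G (pk q.out).1 (pk q.out).2 (p.getVert i) (p.getVert (i+1)) := by
      intro q i hq
      have h1 : (⟦q.out⟧ : Quotient St) = f i := (Quotient.out_eq q).trans hq.symm
      have hr := Quotient.exact h1
      have hr' : Theta G (q.out).1 s(p.getVert i, p.getVert (i+1)) := hr
      rw [hpk1 q.out] at hr'
      exact theta_mk_iff'.mp hr'
    have hinj : Function.Injective f := by
      intro i j hij
      have hr := Quotient.exact hij
      have hr' : Theta G s(p.getVert i, p.getVert (i+1))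
          s(p.getVert j, p.getVert (j+1)) := hr
      by_contra hne
      exact hnoθ i j i.2 j.2 (fun hc => hne (Fin.ext hc)) (theta_mk_iff'.mp hr')
    have key : ∀ q : Quotient St,
        (decide (G.dist (pk q.out).1 u < G.dist (pk q.out).2 u) ≠
         decide (G.dist (pk q.out).1 v < G.dist (pk q.out).2 v)) ↔ ∃ i, f i = q := by
      intro q
      have hadj : G.Adj (pk q.out).1 (pk q.out).2 := hpk2 q.out
      have hd := adj_dist_dichotomy' C hconn hadj
      rw [ne_eq, decide_eq_decide, crossCount_parity' hd p]
      constructor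
      · intro hodd
        have hpos : 0 < crossCount G (pk q.out).1 (pk q.out).2 p := by
          rcases Nat.eq_zero_or_pos (crossCount G (pk q.out).1 (pk q.out).2 p) with h0 | h0
          · exact absurd (h0 ▸ Even.zero) hodd
          · exact h0
        unfold crossCount at hpos
        obtain ⟨j, hjmem, hjP⟩ := List.countP_pos_iff.mp hpos
        have hj : j < p.length := List.mem_range.mp hjmem
        have hθ : ThetaV G (pk q.out).1 (pk q.out).2 (p.getVert j) (p.getVert (j+1)) :=
          of_decide_eq_true hjP
        refine ⟨⟨j, hj⟩, ?_⟩
        have hr : St.r ⟨s(p.getVert j, p.getVert (j+1)), hmem j hj⟩ q.out := by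
          show Theta G _ (q.out).1
          rw [hpk1 q.out]
          exact theta_mk_iff'.mpr (thetaV_comm' hθ)
        exact (Quotient.sound hr).trans (Quotient.out_eq q)
      · rintro ⟨i, hi⟩
        have hθi := hrel q i hi
        have hcnt : crossCount G (pk q.out).1 (pk q.out).2 p = 1 := by
          apply countP_eq_one_aux _ _ List.nodup_range (i : ℕ)
            (List.mem_range.mpr i.2) (decide_eq_true hθi)
          intro j hjmem hjP
          have hj : j < p.length := List.mem_range.mp hjmem
          have hθj : ThetaV G (pk q.out).1 (pk q.out).2 (p.getVert j) (p.getVert (j+1)) :=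
            of_decide_eq_true hjP
          by_contra hne
          have hea : s((pk q.out).1, (pk q.out).2) ∈ G.edgeSet := G.mem_edgeSet.mpr hadj
          have hRi : Theta G s(p.getVert (i : ℕ), p.getVert ((i : ℕ)+1))
              s((pk q.out).1, (pk q.out).2) := theta_mk_iff'.mpr (thetaV_comm' hθi)
          have hRj' : Theta G s((pk q.out).1, (pk q.out).2)
              s(p.getVert j, p.getVert (j+1)) := theta_mk_iff'.mpr hθj
          have hRij : Theta G s(p.getVert (i : ℕ), p.getVert ((i : ℕ)+1))
              s(p.getVert j, p.getVert (j+1)) :=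
            hEq.trans (x := ⟨_, hmem (i : ℕ) i.2⟩) (y := ⟨_, hea⟩)
              (z := ⟨_, hmem j hj⟩) hRi hRj'
          exact hnoθ (i : ℕ) j i.2 hj (fun hc => hne hc.symm) (theta_mk_iff'.mp hRij)
        rw [hcnt]
        decide
    have hset : {q : Quotient St |
        decide (G.dist (pk q.out).1 u < G.dist (pk q.out).2 u) ≠
        decide (G.dist (pk q.out).1 v < G.dist (pk q.out).2 v)} = Set.range f := by
      ext q
      exact (key q).trans (Iff.symm Set.mem_range)
    constructor
    · rw [show {i_1 : Quotient St |
        decide (G.dist (pk i_1.out).1 u < G.dist (pk i_1.out).2 u) ≠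
        decide (G.dist (pk i_1.out).1 v < G.dist (pk i_1.out).2 v)} = Set.range f from hset]
      exact Set.finite_range f
    · rw [hset, ← Set.image_univ, Set.ncard_image_of_injective _ hinj, Set.ncard_univ,
        Nat.card_eq_fintype_card, Fintype.card_fin, ← hp]
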